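/- With f, g continuous on [0,1] and Ψ_{n,k} defined as above on the standard dyadic tree, the uniform bound sup_{0≤k<2^{n-1}} sup_{t∈[0,1]} |Ψ_{n,k}(t)| ≤ 2^{−(n+1)/2}·‖g‖_∞·‖f‖_∞ holds for all n ≥ 1. -/

import Mathlib

open MeasureTheory intervalIntegral

/-- `h(t) = ∫₀ᵗ f(u)² du`. -/
noncomputable def hFun (f : ℝ → ℝ) (t : ℝ) : ℝ := ∫ u in (0:ℝ)..t, (f u) ^ 2

/-- Left endpoint `l_{n,k} = 2k·2⁻ⁿ` of the dyadic support `S_{n,k}`. -/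
noncomputable def lPt (n k : ℕ) : ℝ := (2 * k : ℝ) / 2 ^ n

/-- Midpoint `m_{n,k} = (2k+1)·2⁻ⁿ`. -/
noncomputable def mPt (n k : ℕ) : ℝ := (2 * k + 1 : ℝ) / 2 ^ n

/-- Right endpoint `r_{n,k} = 2(k+1)·2⁻ⁿ`. -/
noncomputable def rPt (n k : ℕ) : ℝ := (2 * k + 2 : ℝ) / 2 ^ n

/-- `L_{n,k} = √((h r − h m)/((h r − h l)(h m − h l)))`. -/
noncomputable def Lcoef (f : ℝ → ℝ) (n k : ℕ) : ℝ :=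
  Real.sqrt ((hFun f (rPt n k) - hFun f (mPt n k)) /
    ((hFun f (rPt n k) - hFun f (lPt n k)) * (hFun f (mPt n k) - hFun f (lPt n k))))

/-- `R_{n,k} = √((h m − h l)/((h r − h l)(h r − h m)))`. -/
noncomputable def Rcoef (f : ℝ → ℝ) (n k : ℕ) : ℝ :=
  Real.sqrt ((hFun f (mPt n k) - hFun f (lPt n k)) /
    ((hFun f (rPt n k) - hFun f (lPt n k)) * (hFun f (rPt n k) - hFun f (mPt n k))))

/-- The auxiliary Haar-like family `Φ_{n,k}`: `Φ_{0,0} = f/√(h 1 − h 0)` and, for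
`n > 0`, `L_{n,k}·f` on `[l,m)`, `−R_{n,k}·f` on `[m,r)`, `0` elsewhere. -/
noncomputable def Phi (f : ℝ → ℝ) (n k : ℕ) (t : ℝ) : ℝ :=
  if n = 0 then f t / Real.sqrt (hFun f 1 - hFun f 0)
  else if lPt n k ≤ t ∧ t < mPt n k then Lcoef f n k * f t
  else if mPt n k ≤ t ∧ t < rPt n k then -(Rcoef f n k * f t)
  else 0
/-- The Schauder-like basis `Ψ_{n,k}`: `Ψ_{0,0}(t) = g t (h t − h 0)/√(h 1 − h 0)`
and, for `n > 0`, `L_{n,k}·g(t)(h t − h l)` on `[l,m)`,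
`R_{n,k}·g(t)(h r − h t)` on `[m,r)`, `0` elsewhere. -/
noncomputable def Psi (f g : ℝ → ℝ) (n k : ℕ) (t : ℝ) : ℝ :=
  if n = 0 then g t * (hFun f t - hFun f 0) / Real.sqrt (hFun f 1 - hFun f 0)
  else if lPt n k ≤ t ∧ t < mPt n k then Lcoef f n k * (g t * (hFun f t - hFun f (lPt n k)))
  else if mPt n k ≤ t ∧ t < rPt n k then Rcoef f n k * (g t * (hFun f (rPt n k) - hFun f t))
  else 0

lemma hFun_sub (f : ℝ → ℝ) (hf : Continuous f) (a b : ℝ) :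
    hFun f b - hFun f a = ∫ u in a..b, f u ^ 2 := by
  unfold hFun
  rw [intervalIntegral.integral_interval_sub_left (f := fun u => f u ^ 2) ((hf.pow 2).intervalIntegrable _ _)
    ((hf.pow 2).intervalIntegrable _ _)]

lemma hFun_mono (f : ℝ → ℝ) (hf : Continuous f) {a b : ℝ} (hab : a ≤ b) :
    0 ≤ hFun f b - hFun f a := by
  rw [hFun_sub f hf]
  exact intervalIntegral.integral_nonneg hab (fun u _ => sq_nonneg _)

lemma hFun_le (f : ℝ → ℝ) (hf : Continuous f) {Mf : ℝ}
    (hMf : ∀ t ∈ Set.Icc (0:ℝ) 1, |f t| ≤ Mf)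
    {a b : ℝ} (h0 : 0 ≤ a) (hab : a ≤ b) (hb1 : b ≤ 1) :
    hFun f b - hFun f a ≤ Mf ^ 2 * (b - a) := by
  rw [hFun_sub f hf]
  calc ∫ u in a..b, f u ^ 2 ≤ ∫ _u in a..b, Mf ^ 2 := by
        apply intervalIntegral.integral_mono_on hab ((hf.pow 2).intervalIntegrable _ _)
          intervalIntegrable_const
        intro u hu
        have hu' : u ∈ Set.Icc (0:ℝ) 1 := ⟨h0.trans hu.1, hu.2.trans hb1⟩
        have := hMf u hu'
        calc f u ^ 2 = |f u| ^ 2 := (sq_abs _).symm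
          _ ≤ Mf ^ 2 := by
            have h0' : 0 ≤ |f u| := abs_nonneg _
            nlinarith
    _ = Mf ^ 2 * (b - a) := by simp [mul_comm]

/-- Key algebraic bound: `√(b/((a+b)a))·x ≤ √((a+b)/4)` for `0 ≤ x ≤ a`, `0 ≤ b`. -/
lemma key_bound (a b x : ℝ) (ha : 0 ≤ a) (hb : 0 ≤ b) (hx0 : 0 ≤ x) (hxa : x ≤ a) :
    Real.sqrt (b / ((a + b) * a)) * x ≤ Real.sqrt ((a + b) / 4) := by
  have hc : 0 ≤ b / ((a + b) * a) := div_nonneg hb (mul_nonneg (by linarith) ha)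
  have hL : 0 ≤ Real.sqrt (b / ((a + b) * a)) * x := mul_nonneg (Real.sqrt_nonneg _) hx0
  rw [← Real.sqrt_sq hL]
  apply Real.sqrt_le_sqrt
  have hsq : (Real.sqrt (b / ((a + b) * a)) * x) ^ 2 = b / ((a + b) * a) * x ^ 2 := by
    rw [mul_pow, Real.sq_sqrt hc]
  rw [hsq]
  rcases eq_or_lt_of_le ha with h | h
  · have hx : x = 0 := le_antisymm (h ▸ hxa) hx0
    simp [hx]
    positivity
  · have habpos : 0 < a + b := by linarith
    have h1 : b / ((a + b) * a) * x ^ 2 ≤ b / ((a + b) * a) * a ^ 2 := by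
      apply mul_le_mul_of_nonneg_left _ hc
      nlinarith
    refine h1.trans ?_
    rw [div_mul_eq_mul_div, div_le_div_iff₀ (by positivity) (by norm_num)]
    nlinarith [sq_nonneg (a - b)]

lemma piece_bound (C M x B y : ℝ) (hC : C * x ≤ B) (hC0 : 0 ≤ C) (hx0 : 0 ≤ x)
    (hyM : |y| ≤ M) : |C * (y * x)| ≤ B * M := by
  have hB0 : 0 ≤ B := (mul_nonneg hC0 hx0).trans hC
  rw [abs_mul, abs_of_nonneg hC0, abs_mul, abs_of_nonneg hx0]
  calc C * (|y| * x) = (C * x) * |y| := by ring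
    _ ≤ B * M := mul_le_mul hC hyM (abs_nonneg _) hB0

/-- the uniform bound
`sup_{k < 2^{n-1}} sup_{t ∈ [0,1]} |Ψ_{n,k}(t)| ≤ 2^{-(n+1)/2}·‖g‖_∞·‖f‖_∞`
for `n ≥ 1`, stated through arbitrary sup-norm bounds `Mf, Mg` of `f, g` on
`[0,1]`. -/
theorem Psi_uniform_bound
    (f g : ℝ → ℝ) (hf : Continuous f) (hg : Continuous g)
    (Mf Mg : ℝ)
    (hMf : ∀ t ∈ Set.Icc (0:ℝ) 1, |f t| ≤ Mf)
    (hMg : ∀ t ∈ Set.Icc (0:ℝ) 1, |g t| ≤ Mg) :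
    ∀ n : ℕ, 1 ≤ n → ∀ k : ℕ, k < 2 ^ (n - 1) → ∀ t ∈ Set.Icc (0:ℝ) 1,
      |Psi f g n k t| ≤ (2:ℝ) ^ (-((n:ℝ) + 1) / 2) * Mg * Mf := by
  intro n hn k hk t ht
  have hMf0 : 0 ≤ Mf := (abs_nonneg _).trans (hMf 0 (by norm_num))
  have hMg0 : 0 ≤ Mg := (abs_nonneg _).trans (hMg 0 (by norm_num))
  have hn0 : n ≠ 0 := by omega
  have h2n : (0:ℝ) < 2 ^ n := by positivity
  have hlm : lPt n k ≤ mPt n k := by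
    unfold lPt mPt; gcongr <;> linarith
  have hmr : mPt n k ≤ rPt n k := by
    unfold mPt rPt; gcongr <;> linarith
  have hl0 : 0 ≤ lPt n k := by unfold lPt; positivity
  have hr1 : rPt n k ≤ 1 := by
    unfold rPt
    rw [div_le_one h2n]
    have hk' : (k:ℝ) + 1 ≤ (2:ℝ) ^ (n - 1) := by exact_mod_cast hk
    have h2 : (2:ℝ) ^ (n - 1) * 2 = 2 ^ n := by
      rw [← pow_succ]; congr 1; omega
    linarith
  have hm1 : mPt n k ≤ 1 := hmr.trans hr1
  have hm0 : 0 ≤ mPt n k := hl0.trans hlm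
  -- abbreviations
  have ha : 0 ≤ hFun f (mPt n k) - hFun f (lPt n k) := hFun_mono f hf hlm
  have hb : 0 ≤ hFun f (rPt n k) - hFun f (mPt n k) := hFun_mono f hf hmr
  -- the bound on the constant √((h r − h l)/4)
  have hrl : hFun f (rPt n k) - hFun f (lPt n k) ≤ Mf ^ 2 * (rPt n k - lPt n k) :=
    hFun_le f hf hMf hl0 (hlm.trans hmr) hr1
  have hdiff : rPt n k - lPt n k = 2 / 2 ^ n := by
    unfold lPt rPt; field_simp; ring
  have hpow : (2:ℝ) ^ (-((n:ℝ) + 1)) = ((2:ℝ) ^ (n + 1))⁻¹ := by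
    rw [show -((n:ℝ) + 1) = -((n + 1 : ℕ) : ℝ) by push_cast; ring,
      Real.rpow_neg (by norm_num), Real.rpow_natCast]
  have hconst : Real.sqrt ((hFun f (rPt n k) - hFun f (lPt n k)) / 4) ≤
      (2:ℝ) ^ (-((n:ℝ) + 1) / 2) * Mf := by
    have h1 : (hFun f (rPt n k) - hFun f (lPt n k)) / 4 ≤ Mf ^ 2 * (2:ℝ) ^ (-((n:ℝ) + 1)) := by
      rw [hpow]
      have h2 : Mf ^ 2 * (2 / 2 ^ n) / 4 = Mf ^ 2 * ((2:ℝ) ^ (n + 1))⁻¹ := by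
        rw [pow_succ]; field_simp; ring
      rw [hdiff] at hrl
      linarith
    calc Real.sqrt ((hFun f (rPt n k) - hFun f (lPt n k)) / 4)
        ≤ Real.sqrt (Mf ^ 2 * (2:ℝ) ^ (-((n:ℝ) + 1))) := Real.sqrt_le_sqrt h1
      _ = Mf * Real.sqrt ((2:ℝ) ^ (-((n:ℝ) + 1))) := by
          rw [Real.sqrt_mul (sq_nonneg _), Real.sqrt_sq hMf0]
      _ = (2:ℝ) ^ (-((n:ℝ) + 1) / 2) * Mf := by
          rw [Real.sqrt_eq_rpow, ← Real.rpow_mul (by norm_num), mul_one_div]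
          exact mul_comm _ _
  -- now split on the three cases of Psi
  unfold Psi
  rw [if_neg hn0]
  split_ifs with h1 h2
  · -- t ∈ [l, m)
    have hx0 : 0 ≤ hFun f t - hFun f (lPt n k) := hFun_mono f hf h1.1
    have hxa : hFun f t - hFun f (lPt n k) ≤ hFun f (mPt n k) - hFun f (lPt n k) := by
      have := hFun_mono f hf (le_of_lt h1.2)
      linarith
    have hLx : Lcoef f n k * (hFun f t - hFun f (lPt n k)) ≤
        Real.sqrt ((hFun f (rPt n k) - hFun f (lPt n k)) / 4) := by
      have hkey := key_bound (hFun f (mPt n k) - hFun f (lPt n k))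
        (hFun f (rPt n k) - hFun f (mPt n k)) (hFun f t - hFun f (lPt n k)) ha hb hx0 hxa
      have hL : Lcoef f n k = Real.sqrt ((hFun f (rPt n k) - hFun f (mPt n k)) /
          (((hFun f (mPt n k) - hFun f (lPt n k)) + (hFun f (rPt n k) - hFun f (mPt n k))) *
            (hFun f (mPt n k) - hFun f (lPt n k)))) := by
        unfold Lcoef; congr 2; ring
      have hS : ((hFun f (mPt n k) - hFun f (lPt n k)) + (hFun f (rPt n k) - hFun f (mPt n k)))
          = hFun f (rPt n k) - hFun f (lPt n k) := by ring
      rw [hL]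
      rw [hS] at hkey ⊢
      exact hkey
    have := piece_bound (Lcoef f n k) Mg (hFun f t - hFun f (lPt n k))
      (Real.sqrt ((hFun f (rPt n k) - hFun f (lPt n k)) / 4)) (g t)
      hLx (Real.sqrt_nonneg _) hx0 (hMg t ht)
    calc |Lcoef f n k * (g t * (hFun f t - hFun f (lPt n k)))|
        ≤ Real.sqrt ((hFun f (rPt n k) - hFun f (lPt n k)) / 4) * Mg := this
      _ ≤ ((2:ℝ) ^ (-((n:ℝ) + 1) / 2) * Mf) * Mg :=
          mul_le_mul_of_nonneg_right hconst hMg0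
      _ = (2:ℝ) ^ (-((n:ℝ) + 1) / 2) * Mg * Mf := by ring
  · -- t ∈ [m, r)
    have hx0 : 0 ≤ hFun f (rPt n k) - hFun f t := hFun_mono f hf (le_of_lt h2.2)
    have hxa : hFun f (rPt n k) - hFun f t ≤ hFun f (rPt n k) - hFun f (mPt n k) := by
      have := hFun_mono f hf h2.1
      linarith
    have hRx : Rcoef f n k * (hFun f (rPt n k) - hFun f t) ≤
        Real.sqrt ((hFun f (rPt n k) - hFun f (lPt n k)) / 4) := by
      have hkey := key_bound (hFun f (rPt n k) - hFun f (mPt n k))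
        (hFun f (mPt n k) - hFun f (lPt n k)) (hFun f (rPt n k) - hFun f t) hb ha hx0 hxa
      have hR : Rcoef f n k = Real.sqrt ((hFun f (mPt n k) - hFun f (lPt n k)) /
          (((hFun f (rPt n k) - hFun f (mPt n k)) + (hFun f (mPt n k) - hFun f (lPt n k))) *
            (hFun f (rPt n k) - hFun f (mPt n k)))) := by
        unfold Rcoef; congr 2; ring
      have hS : ((hFun f (rPt n k) - hFun f (mPt n k)) + (hFun f (mPt n k) - hFun f (lPt n k)))
          = hFun f (rPt n k) - hFun f (lPt n k) := by ring
      rw [hR]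
      rw [hS] at hkey ⊢
      exact hkey
    have := piece_bound (Rcoef f n k) Mg (hFun f (rPt n k) - hFun f t)
      (Real.sqrt ((hFun f (rPt n k) - hFun f (lPt n k)) / 4)) (g t)
      hRx (Real.sqrt_nonneg _) hx0 (hMg t ht)
    calc |Rcoef f n k * (g t * (hFun f (rPt n k) - hFun f t))|
        ≤ Real.sqrt ((hFun f (rPt n k) - hFun f (lPt n k)) / 4) * Mg := this
      _ ≤ ((2:ℝ) ^ (-((n:ℝ) + 1) / 2) * Mf) * Mg :=
          mul_le_mul_of_nonneg_right hconst hMg0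
      _ = (2:ℝ) ^ (-((n:ℝ) + 1) / 2) * Mg * Mf := by ring
  · simpa using by positivity
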